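/- Let 2 ≤ m ≤ q−1 and let τ ∈ 𝔽_{q²} satisfy τ^q + τ = 1. For any m−2 pairwise distinct elements c_1,…,c_{m−2} ∈ 𝔽_q with all c_i ≠ 0, the nonzero pair (g, ε) with ε = 0 and g = ∏_{i=1}^{m−2}(Y − τ·c_i) satisfies: the number of x ∈ 𝔽_{q²}, x ≠ 0, with τ·x^{q+1}·g(x, τ·x^{q+1}) + ε·x^m = 0 is exactly (m−2)(q+1). Consequently the minimum distance of the functional AG code C_𝓛(𝙳,𝙶) is at most q²−1−(m−2)(q+1). -/

import Mathlib

open Finset Polynomial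

/-- Fiber count: in a field containing a primitive `n`-th root of unity, the equation
`x ^ n = c` with `c ≠ 0` solvable has exactly `n` solutions. -/
lemma fiber_card {F : Type*} [Field F] [Fintype F] [DecidableEq F] {n : ℕ} (hn : 0 < n)
    {ζ : F} (hζ : IsPrimitiveRoot ζ n) {c : F} (hc : c ≠ 0) (hex : ∃ α : F, α ^ n = c) :
    (Finset.univ.filter fun x : F => x ^ n = c).card = n := by
  have h1 : (Polynomial.nthRoots n c).toFinset = Finset.univ.filter fun x : F => x ^ n = c := by
    ext x
    simp [Polynomial.mem_nthRoots hn]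
  rw [← h1, Multiset.toFinset_card_of_nodup (hζ.nthRoots_nodup hc), hζ.card_nthRoots,
    if_pos hex]

/-- In a finite field of cardinality `q²`, there is a primitive `(q+1)`-st root of unity, and
every nonzero `c` with `c ^ q = c` is a `(q+1)`-st power. -/
lemma exists_prim_and_pow {F : Type*} [Field F] [Fintype F] [DecidableEq F] {q : ℕ}
    (hq3 : 3 ≤ q) (hF : Fintype.card F = q ^ 2) :
    ∃ ζ : F, IsPrimitiveRoot ζ (q + 1) ∧
      ∀ c : F, c ≠ 0 → c ^ q = c → ∃ α : F, α ^ (q + 1) = c := by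
  obtain ⟨k, rfl⟩ : ∃ k, q = k + 1 := ⟨q - 1, by omega⟩
  have hk : 2 ≤ k := by omega
  obtain ⟨g, hg⟩ := IsCyclic.exists_ofOrder_eq_natCard (α := Fˣ)
  have hcard : Nat.card Fˣ = k * (k + 2) := by
    rw [Nat.card_eq_fintype_card, Fintype.card_units, hF]
    have : (k + 1) ^ 2 = k * (k + 2) + 1 := by ring
    omega
  have hgo : orderOf g = k * (k + 2) := hg.trans hcard
  have hzo : orderOf (g ^ k) = k + 2 := by
    rw [orderOf_pow, hgo]
    have hgcd : Nat.gcd (k * (k + 2)) k = k := Nat.gcd_eq_right (dvd_mul_right k (k + 2))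
    rw [hgcd, Nat.mul_div_cancel_left _ (by omega : 0 < k)]
  have hζu : IsPrimitiveRoot (g ^ k) (k + 2) := by
    rw [← hzo]; exact IsPrimitiveRoot.orderOf _
  refine ⟨((g ^ k : Fˣ) : F), IsPrimitiveRoot.coe_units_iff.mpr hζu, ?_⟩
  intro c hc hcq
  -- c ^ k = 1
  have hck : c ^ k = 1 := by
    have : c ^ k * c = c := by
      rw [← pow_succ]; exact hcq
    have := mul_right_cancel₀ hc (this.trans (one_mul c).symm)
    exact this
  set u : Fˣ := Units.mk0 c hc with hu
  have huk : u ^ k = 1 := by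
    ext
    push_cast
    simpa [hu] using hck
  -- u is a power of g
  have htop : Subgroup.zpowers g = ⊤ := by
    apply Subgroup.eq_top_of_card_eq
    rw [Nat.card_zpowers, hg]
  have humem : u ∈ Submonoid.powers g := by
    rw [mem_powers_iff_mem_zpowers]
    rw [htop]; trivial
  obtain ⟨n, hn⟩ := humem
  have hn' : g ^ n = u := hn
  have hdvd : orderOf g ∣ n * k := by
    apply orderOf_dvd_of_pow_eq_one
    rw [pow_mul, hn', huk]
  rw [hgo] at hdvd
  have hdvd' : k * (k + 2) ∣ k * n := by
    rwa [mul_comm n k] at hdvd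
  have hk2n : (k + 2) ∣ n := (Nat.mul_dvd_mul_iff_left (by omega : 0 < k)).mp hdvd'
  obtain ⟨j, rfl⟩ := hk2n
  refine ⟨((g ^ j : Fˣ) : F), ?_⟩
  have hpow2 : (g ^ j) ^ (k + 2) = u := by
    rw [← pow_mul, mul_comm j (k + 2), hn']
  calc ((g ^ j : Fˣ) : F) ^ ((k + 1) + 1) = (((g ^ j) ^ (k + 2) : Fˣ) : F) := by push_cast; ring
    _ = c := by rw [hpow2, hu]; simp

/-- Let `2 ≤ m ≤ q − 1` and `τ^q + τ = 1`. For pairwise distinct nonzero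
`c_1, …, c_{m−2} ∈ 𝔽_q`, the nonzero pair `(g, ε)` with `ε = 0` and
`g = ∏ (Y − τ·c_i)` satisfies: the number of `x ∈ 𝔽_{q²}`, `x ≠ 0`, with
`τ·x^(q+1)·g(x, τ·x^(q+1)) + ε·x^m = 0` is exactly `(m−2)(q+1)`. Consequently the minimum
distance of `C_𝓛(𝙳,𝙶)` is at most `q² − 1 − (m−2)(q+1)`: the corresponding codeword has
exactly `q² − 1 − (m−2)(q+1)` nonzero coordinates. -/
theorem stmt_4 (q : ℕ) (hq : IsPrimePow q) (hq3 : 3 ≤ q)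
    (F : Type*) [Field F] [Fintype F] [DecidableEq F] (hF : Fintype.card F = q ^ 2)
    (τ : F) (hτ : τ ^ q + τ = 1)
    (m : ℕ) (hm : 2 ≤ m) (hm' : m ≤ q - 1)
    (c : Fin (m - 2) → F) (hcinj : Function.Injective c)
    (hc0 : ∀ i, c i ≠ 0) (hcq : ∀ i, c i ^ q = c i) :
    (∏ i, (MvPolynomial.X (1 : Fin 2) - MvPolynomial.C (τ * c i)) : MvPolynomial (Fin 2) F)
        ≠ 0 ∧
    (Finset.univ.filter fun x : F => x ≠ 0 ∧
        τ * x ^ (q + 1) *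
            MvPolynomial.eval ![x, τ * x ^ (q + 1)]
              (∏ i, (MvPolynomial.X (1 : Fin 2) - MvPolynomial.C (τ * c i))) +
          0 * x ^ m = 0).card = (m - 2) * (q + 1) ∧
    (Finset.univ.filter fun x : F => x ≠ 0 ∧
        τ * x ^ (q + 1) *
            MvPolynomial.eval ![x, τ * x ^ (q + 1)]
              (∏ i, (MvPolynomial.X (1 : Fin 2) - MvPolynomial.C (τ * c i))) +
          0 * x ^ m ≠ 0).card = q ^ 2 - 1 - (m - 2) * (q + 1) := by
  have hq0 : q ≠ 0 := by omega
  have hτ0 : τ ≠ 0 := by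
    intro h
    rw [h, zero_pow hq0, add_zero] at hτ
    exact zero_ne_one hτ
  -- the product polynomial is nonzero
  have hfac : ∀ i : Fin (m - 2),
      (MvPolynomial.X (1 : Fin 2) - MvPolynomial.C (τ * c i) : MvPolynomial (Fin 2) F) ≠ 0 := by
    intro i h
    have h2 := congrArg (MvPolynomial.eval ![(0 : F), τ * c i + 1]) h
    simp at h2
  have hgne : (∏ i, (MvPolynomial.X (1 : Fin 2) - MvPolynomial.C (τ * c i)) :
      MvPolynomial (Fin 2) F) ≠ 0 :=
    Finset.prod_ne_zero_iff.mpr fun i _ => hfac i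
  -- evaluation of the product
  have heval : ∀ x : F,
      MvPolynomial.eval ![x, τ * x ^ (q + 1)]
        (∏ i, (MvPolynomial.X (1 : Fin 2) - MvPolynomial.C (τ * c i))) =
        ∏ i, (τ * x ^ (q + 1) - τ * c i) := by
    intro x
    rw [map_prod]
    exact Finset.prod_congr rfl fun i _ => by simp
  -- the zero set equals the union of fibers
  obtain ⟨ζ, hζ, hpow⟩ := exists_prim_and_pow hq3 hF
  have hset : (Finset.univ.filter fun x : F => x ≠ 0 ∧
        τ * x ^ (q + 1) *
            MvPolynomial.eval ![x, τ * x ^ (q + 1)]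
              (∏ i, (MvPolynomial.X (1 : Fin 2) - MvPolynomial.C (τ * c i))) +
          0 * x ^ m = 0) =
      Finset.univ.biUnion (fun i : Fin (m - 2) =>
        Finset.univ.filter fun x : F => x ^ (q + 1) = c i) := by
    ext x
    simp only [Finset.mem_filter, Finset.mem_univ, true_and, Finset.mem_biUnion, heval,
      zero_mul, add_zero]
    constructor
    · rintro ⟨hx, hzero⟩
      have hxne : τ * x ^ (q + 1) ≠ 0 := mul_ne_zero hτ0 (pow_ne_zero _ hx)
      have hprod : (∏ i, (τ * x ^ (q + 1) - τ * c i)) = 0 := by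
        rcases mul_eq_zero.mp hzero with h | h
        · exact absurd h hxne
        · exact h
      obtain ⟨i, _, hi⟩ := Finset.prod_eq_zero_iff.mp hprod
      have : τ * x ^ (q + 1) = τ * c i := by linear_combination hi
      exact ⟨i, mul_left_cancel₀ hτ0 this⟩
    · rintro ⟨i, hi⟩
      have hx : x ≠ 0 := by
        intro h
        rw [h, zero_pow (by omega : q + 1 ≠ 0)] at hi
        exact hc0 i hi.symm
      refine ⟨hx, ?_⟩
      have : (∏ j, (τ * x ^ (q + 1) - τ * c j)) = 0 :=
        Finset.prod_eq_zero (Finset.mem_univ i) (by rw [hi]; ring)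
      rw [this, mul_zero]
  have hfibcard : ∀ i : Fin (m - 2),
      (Finset.univ.filter fun x : F => x ^ (q + 1) = c i).card = q + 1 := fun i =>
    fiber_card (by omega) hζ (hc0 i) (hpow (c i) (hc0 i) (hcq i))
  have hcount : (Finset.univ.filter fun x : F => x ≠ 0 ∧
        τ * x ^ (q + 1) *
            MvPolynomial.eval ![x, τ * x ^ (q + 1)]
              (∏ i, (MvPolynomial.X (1 : Fin 2) - MvPolynomial.C (τ * c i))) +
          0 * x ^ m = 0).card = (m - 2) * (q + 1) := by
    rw [hset, Finset.card_biUnion]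
    · rw [Finset.sum_congr rfl fun i _ => hfibcard i]
      simp [Finset.sum_const, Finset.card_univ]
    · intro i _ j _ hij
      refine Finset.disjoint_left.mpr ?_
      intro x hx hx'
      simp only [Finset.mem_filter] at hx hx'
      exact hij (hcinj (hx.2.symm.trans hx'.2))
  refine ⟨hgne, hcount, ?_⟩
  have hA : (Finset.univ.filter fun x : F => x ≠ 0).card = q ^ 2 - 1 := by
    rw [Finset.filter_ne', Finset.card_erase_of_mem (Finset.mem_univ 0), Finset.card_univ, hF]
  have hdisj : Disjoint
      (Finset.univ.filter fun x : F => x ≠ 0 ∧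
        τ * x ^ (q + 1) *
            MvPolynomial.eval ![x, τ * x ^ (q + 1)]
              (∏ i, (MvPolynomial.X (1 : Fin 2) - MvPolynomial.C (τ * c i))) +
          0 * x ^ m = 0)
      (Finset.univ.filter fun x : F => x ≠ 0 ∧
        τ * x ^ (q + 1) *
            MvPolynomial.eval ![x, τ * x ^ (q + 1)]
              (∏ i, (MvPolynomial.X (1 : Fin 2) - MvPolynomial.C (τ * c i))) +
          0 * x ^ m ≠ 0) := by
    rw [Finset.disjoint_left]
    intro x hx hx'
    simp only [Finset.mem_filter, Finset.mem_univ, true_and] at hx hx'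
    exact hx'.2 hx.2
  have hunion : (Finset.univ.filter fun x : F => x ≠ 0 ∧
        τ * x ^ (q + 1) *
            MvPolynomial.eval ![x, τ * x ^ (q + 1)]
              (∏ i, (MvPolynomial.X (1 : Fin 2) - MvPolynomial.C (τ * c i))) +
          0 * x ^ m = 0) ∪
      (Finset.univ.filter fun x : F => x ≠ 0 ∧
        τ * x ^ (q + 1) *
            MvPolynomial.eval ![x, τ * x ^ (q + 1)]
              (∏ i, (MvPolynomial.X (1 : Fin 2) - MvPolynomial.C (τ * c i))) +
          0 * x ^ m ≠ 0) = Finset.univ.filter fun x : F => x ≠ 0 := by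
    ext x
    simp only [Finset.mem_union, Finset.mem_filter, Finset.mem_univ, true_and]
    tauto
  have hcards := Finset.card_union_of_disjoint hdisj
  rw [hunion, hA, hcount] at hcards
  omega
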